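/- Let A be a type and I, J finite nonempty types. Let 𝒟 be the category whose objects are triples (K, p, q) with K a finite nonempty type, p : I ↠ K a surjection and q : J → K an arbitrary map, a morphism (K, p, q) ⟶ (K′, p′, q′) being a map r : K → K′ with r ∘ p = p′ and r ∘ q = q′. Then the colimit in the category of types of the functor 𝒟ᵒᵖ ⥤ Type given on objects by (K, p, q) ↦ (K → A), with transition maps given by precomposition, is canonically bijective to the set of pairs (f : I → A, g : J → A) such that the image of g is contained in the image of f; the bijection is induced by sending h : K → A to (h ∘ p, h ∘ q). -/

import Mathlib

open CategoryTheory Limits Opposite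

structure SurjCospanHalf (I J : Type) : Type where
  n : ℕ
  p : I → Fin n
  q : J → Fin n
  hp : Function.Surjective p

instance (I J : Type) : Category (SurjCospanHalf I J) where
  Hom X Y := { r : Fin X.n → Fin Y.n // r ∘ X.p = Y.p ∧ r ∘ X.q = Y.q }
  id X := ⟨id, rfl, rfl⟩
  comp {X Y Z} f g := ⟨g.1 ∘ f.1, by
    refine ⟨funext fun i => ?_, funext fun j => ?_⟩
    · have h1 := congrFun f.2.1 i
      have h2 := congrFun g.2.1 i
      simp only [Function.comp_apply] at h1 h2 ⊢
      rw [h1, h2]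
    · have h1 := congrFun f.2.2 j
      have h2 := congrFun g.2.2 j
      simp only [Function.comp_apply] at h1 h2 ⊢
      rw [h1, h2]⟩
  id_comp f := Subtype.ext rfl
  comp_id f := Subtype.ext rfl
  assoc f g h := Subtype.ext rfl

def halfCospanPow (A I J : Type) : (SurjCospanHalf I J)ᵒᵖ ⥤ Type where
  obj X := Fin X.unop.n → A
  map f := TypeCat.ofHom fun h => h ∘ f.unop.1
  map_id := by intros; rfl
  map_comp := by intros; rfl

noncomputable def canon {A I J : Type} [Fintype I] (f : I → A) (g : J → A)
    (hfg : Set.range g ⊆ Set.range f) : SurjCospanHalf I J where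
  n := Nat.card (Set.range f)
  p i := Finite.equivFin (Set.range f) ⟨f i, Set.mem_range_self i⟩
  q j := Finite.equivFin (Set.range f) ⟨g j, hfg (Set.mem_range_self j)⟩
  hp := by
    intro k
    obtain ⟨i, hi⟩ := ((Finite.equivFin (Set.range f)).symm k).2
    refine ⟨i, ?_⟩
    show Finite.equivFin (Set.range f) ⟨f i, Set.mem_range_self i⟩ = k
    have h : (⟨f i, Set.mem_range_self i⟩ : Set.range f)
        = (Finite.equivFin (Set.range f)).symm k := Subtype.ext hi
    rw [h, Equiv.apply_symm_apply]

noncomputable def canonMap {A I J : Type} [Fintype I] (f : I → A) (g : J → A)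
    (hfg : Set.range g ⊆ Set.range f) : Fin (canon f g hfg).n → A :=
  fun k => ((Finite.equivFin (Set.range f)).symm k : A)

lemma canonMap_p {A I J : Type} [Fintype I] (f : I → A) (g : J → A)
    (hfg : Set.range g ⊆ Set.range f) :
    canonMap f g hfg ∘ (canon f g hfg).p = f :=
  funext fun i => by
    show (((Finite.equivFin (Set.range f)).symm (Finite.equivFin (Set.range f) ⟨f i, Set.mem_range_self i⟩) : Set.range f) : A) = f i
    exact congrArg Subtype.val (Equiv.symm_apply_apply _ _)

lemma canonMap_q {A I J : Type} [Fintype I] (f : I → A) (g : J → A)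
    (hfg : Set.range g ⊆ Set.range f) :
    canonMap f g hfg ∘ (canon f g hfg).q = g :=
  funext fun j => by
    show (((Finite.equivFin (Set.range f)).symm (Finite.equivFin (Set.range f) ⟨g j, hfg (Set.mem_range_self j)⟩) : Set.range f) : A) = g j
    exact congrArg Subtype.val (Equiv.symm_apply_apply _ _)

lemma range_sub {A I J : Type} (X : SurjCospanHalf I J) (h : Fin X.n → A) :
    Set.range (h ∘ X.q) ⊆ Set.range (h ∘ X.p) := by
  rintro a ⟨j, rfl⟩
  obtain ⟨i, hi⟩ := X.hp (X.q j)
  exact ⟨i, by simp [hi]⟩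

lemma ι_eq_canon {A I J : Type} [Fintype I] (X : SurjCospanHalf I J) (h : Fin X.n → A)
    (hr : Set.range (h ∘ X.q) ⊆ Set.range (h ∘ X.p)) :
    colimit.ι (halfCospanPow A I J) (op X) h =
      colimit.ι (halfCospanPow A I J) (op (canon (h ∘ X.p) (h ∘ X.q) hr))
        (canonMap (h ∘ X.p) (h ∘ X.q) hr) := by
  have mem : ∀ k, h k ∈ Set.range (h ∘ X.p) := fun k => by
    obtain ⟨i, hi⟩ := X.hp k
    exact ⟨i, by simp [hi]⟩
  let φ : X ⟶ canon (h ∘ X.p) (h ∘ X.q) hr :=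
    ⟨fun k => Finite.equivFin (Set.range (h ∘ X.p)) ⟨h k, mem k⟩, rfl, rfl⟩
  have key := CategoryTheory.congr_fun (colimit.w (halfCospanPow A I J) φ.op)
    (canonMap (h ∘ X.p) (h ∘ X.q) hr)
  replace key : colimit.ι (halfCospanPow A I J) (op X) ((halfCospanPow A I J).map φ.op (canonMap (h ∘ X.p) (h ∘ X.q) hr)) = _ := key
  have : (halfCospanPow A I J).map φ.op (canonMap (h ∘ X.p) (h ∘ X.q) hr) = h := by
    funext k
    exact congrArg Subtype.val (Equiv.symm_apply_apply (Finite.equivFin (Set.range (h ∘ X.p))) ⟨h k, mem k⟩)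
  rw [this] at key
  exact key

noncomputable def coconeS (A I J : Type) : Cocone (halfCospanPow A I J) where
  pt := { fg : (I → A) × (J → A) // Set.range fg.2 ⊆ Set.range fg.1 }
  ι :=
  { app := fun X => TypeCat.ofHom fun h => ⟨(h ∘ X.unop.p, h ∘ X.unop.q), range_sub X.unop h⟩
    naturality := by
      intro X Y φ
      ext h
      refine Subtype.ext (Prod.ext ?_ ?_)
      · show (h ∘ φ.unop.1) ∘ Y.unop.p = h ∘ X.unop.p
        exact congrArg (fun t => h ∘ t) φ.unop.2.1
      · show (h ∘ φ.unop.1) ∘ Y.unop.q = h ∘ X.unop.q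
        exact congrArg (fun t => h ∘ t) φ.unop.2.2 }

theorem stmt8 (A I J : Type) [Fintype I] [Nonempty I] [Fintype J] [Nonempty J] :
    ∃ e : colimit (halfCospanPow A I J) ≃
        { fg : (I → A) × (J → A) // Set.range fg.2 ⊆ Set.range fg.1 },
      ∀ (X : SurjCospanHalf I J) (h : Fin X.n → A),
        (e (colimit.ι (halfCospanPow A I J) (op X) h)).1 = (h ∘ X.p, h ∘ X.q) := by
  classical
  let F := halfCospanPow A I J
  let d : colimit F → { fg : (I → A) × (J → A) // Set.range fg.2 ⊆ Set.range fg.1 } :=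
    colimit.desc F (coconeS A I J)
  have hd : ∀ (X : SurjCospanHalf I J) (h : Fin X.n → A),
      d (colimit.ι F (op X) h) = ⟨(h ∘ X.p, h ∘ X.q), range_sub X h⟩ := by
    intro X h
    exact CategoryTheory.congr_fun (colimit.ι_desc (coconeS A I J) (op X)) h
  refine ⟨⟨d, fun s => colimit.ι F (op (canon s.1.1 s.1.2 s.2)) (canonMap s.1.1 s.1.2 s.2),
    ?_, ?_⟩, ?_⟩
  · intro x
    obtain ⟨j, h, rfl⟩ := Types.jointly_surjective' (F := F) x
    rw [hd j.unop h]
    exact (ι_eq_canon j.unop h (range_sub j.unop h)).symm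
  · rintro ⟨⟨f, g⟩, hfg⟩
    rw [hd]
    exact Subtype.ext (Prod.ext (canonMap_p f g hfg) (canonMap_q f g hfg))
  · intro X h
    rw [show (⟨d, _, _, _⟩ : colimit F ≃ _) (colimit.ι F (op X) h) = d (colimit.ι F (op X) h) from rfl, hd]
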